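/- For every integer N ≥ 1, 1 − ∑_{k=0}^{N−2} √( g_k · g_{k+1} ) ≤ π²/N², where g_k := (2/N) sin²(π(2k+1)/(2N)). (Indeed the stronger bound with π²/(2N²) on the right-hand side also holds.) -/

import Mathlib

/-- The distribution `g_k := (2/N) sin²(π(2k+1)/(2N))`. -/
noncomputable def sineDist (N k : ℕ) : ℝ :=
  (2 / (N : ℝ)) * Real.sin (Real.pi * (2 * (k : ℝ) + 1) / (2 * (N : ℝ))) ^ 2

/-- Eq. (31) of the appendix: for every `N ≥ 1`,
`ε_g = 1 − ∑_{k=0}^{N−2} √(g_k g_{k+1}) ≤ π²/N²`. -/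
theorem epsilon_g_bound (N : ℕ) (hN : 1 ≤ N) :
    1 - ∑ k ∈ Finset.range (N - 1), Real.sqrt (sineDist N k * sineDist N (k + 1))
      ≤ Real.pi ^ 2 / (N : ℝ) ^ 2 := by
  rcases eq_or_lt_of_le hN with h1 | h2
  · -- N = 1 : empty sum
    have hpi := Real.pi_gt_three
    rw [← h1]
    norm_num
    rw [abs_of_pos Real.pi_pos]
    linarith
  · have hN2 : 2 ≤ N := h2
    have hn : (2:ℝ) ≤ (N:ℝ) := by exact_mod_cast hN2
    have hn0 : (0:ℝ) < (N:ℝ) := by linarith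
    have hn0' : (N:ℝ) ≠ 0 := ne_of_gt hn0
    have hπ := Real.pi_pos
    set n : ℝ := (N:ℝ) with hndef
    set C : ℝ := Real.cos (Real.pi / n) with hCdef
    -- per-term value
    have hterm : ∀ k ∈ Finset.range (N - 1),
        Real.sqrt (sineDist N k * sineDist N (k + 1))
          = (1 / n) * (C - Real.cos (2 * Real.pi * ((k:ℝ) + 1) / n)) := by
      intro k hk
      rw [Finset.mem_range] at hk
      have hk2 : (k:ℝ) + 2 ≤ n := by
        have h : k + 2 ≤ N := by omega
        calc (k:ℝ) + 2 = ((k + 2 : ℕ) : ℝ) := by push_cast; ring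
          _ ≤ n := by rw [hndef]; exact_mod_cast h
      set a : ℝ := Real.pi * (2 * (k:ℝ) + 1) / (2 * n) with ha
      set b : ℝ := Real.pi * (2 * ((k:ℝ) + 1) + 1) / (2 * n) with hb
      have hsa : 0 ≤ Real.sin a := by
        apply Real.sin_nonneg_of_nonneg_of_le_pi
        · positivity
        · rw [ha, div_le_iff₀ (by positivity)]
          nlinarith
      have hsb : 0 ≤ Real.sin b := by
        apply Real.sin_nonneg_of_nonneg_of_le_pi
        · positivity
        · rw [hb, div_le_iff₀ (by positivity)]
          nlinarith
      have hprod : sineDist N k * sineDist N (k + 1)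
          = ((2 / n) * (Real.sin a * Real.sin b)) ^ 2 := by
        simp only [sineDist, ha, hb]
        push_cast
        ring
      rw [hprod, Real.sqrt_sq (by positivity)]
      have e1 : C = Real.cos b * Real.cos a + Real.sin b * Real.sin a := by
        rw [hCdef, show Real.pi / n = b - a by rw [ha, hb]; field_simp; ring, Real.cos_sub]
      have e2 : Real.cos (2 * Real.pi * ((k:ℝ) + 1) / n)
          = Real.cos b * Real.cos a - Real.sin b * Real.sin a := by
        rw [show 2 * Real.pi * ((k:ℝ) + 1) / n = b + a by rw [ha, hb]; field_simp; ring,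
          Real.cos_add]
      rw [e1, e2]
      ring
    rw [Finset.sum_congr rfl hterm, ← Finset.mul_sum]
    -- cosine sum telescopes to -1
    have hsin : 0 < Real.sin (Real.pi / n) := by
      apply Real.sin_pos_of_pos_of_lt_pi
      · positivity
      · rw [div_lt_iff₀ hn0]
        nlinarith
    have hS : ∑ k ∈ Finset.range (N - 1), Real.cos (2 * Real.pi * ((k:ℝ) + 1) / n) = -1 := by
      set f : ℕ → ℝ := fun k => Real.sin (Real.pi * (2 * (k:ℝ) + 1) / n) with hf
      have hstep : ∀ k : ℕ, f (k + 1) - f k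
          = 2 * Real.sin (Real.pi / n) * Real.cos (2 * Real.pi * ((k:ℝ) + 1) / n) := by
        intro k
        have h1 : f (k + 1) = Real.sin (2 * Real.pi * ((k:ℝ) + 1) / n + Real.pi / n) := by
          rw [hf]; push_cast; ring_nf
        have h2 : f k = Real.sin (2 * Real.pi * ((k:ℝ) + 1) / n - Real.pi / n) := by
          rw [hf]; ring_nf
        rw [h1, h2, Real.sin_add, Real.sin_sub]
        ring
      have htel : ∑ k ∈ Finset.range (N - 1), (f (k + 1) - f k) = f (N - 1) - f 0 :=
        Finset.sum_range_sub f (N - 1)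
      have hcast : ((N - 1 : ℕ) : ℝ) = n - 1 := by
        rw [hndef]; push_cast [Nat.cast_sub hN]; ring
      have hfN : f (N - 1) = -Real.sin (Real.pi / n) := by
        rw [hf]
        simp only [hcast]
        rw [show Real.pi * (2 * (n - 1) + 1) / n = 2 * Real.pi - Real.pi / n by
          field_simp; ring, Real.sin_sub, Real.sin_two_pi, Real.cos_two_pi]
        ring
      have hf0 : f 0 = Real.sin (Real.pi / n) := by
        rw [hf]; norm_num
      have h2s : (2 * Real.sin (Real.pi / n)) *
          (∑ k ∈ Finset.range (N - 1), Real.cos (2 * Real.pi * ((k:ℝ) + 1) / n))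
          = (2 * Real.sin (Real.pi / n)) * (-1) := by
        rw [Finset.mul_sum]
        simp only [← hstep]
        rw [htel, hfN, hf0]
        ring
      exact mul_left_cancel₀ (by positivity) h2s
    rw [Finset.sum_sub_distrib, hS, Finset.sum_const, Finset.card_range, nsmul_eq_mul]
    have hcast : ((N - 1 : ℕ) : ℝ) = n - 1 := by
      rw [hndef]; push_cast [Nat.cast_sub hN]; ring
    rw [hcast]
    -- final estimate
    have hC1 : C ≤ 1 := Real.cos_le_one _
    have hC' : 1 - Real.pi ^ 2 / (2 * n ^ 2) ≤ C := by
      have h := Real.one_sub_sq_div_two_le_cos (x := Real.pi / n)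
      have he : (Real.pi / n) ^ 2 / 2 = Real.pi ^ 2 / (2 * n ^ 2) := by
        field_simp
      linarith [he ▸ h]
    have heq : (1:ℝ) - 1 / n * ((n - 1) * C - -1) = ((n - 1) / n) * (1 - C) := by
      field_simp
      ring
    rw [heq]
    have h1 : (n - 1) / n ≤ 1 := by
      rw [div_le_one hn0]; linarith
    have h2 : (0:ℝ) ≤ (n - 1) / n := by apply div_nonneg <;> linarith
    have h3 : 1 - C ≤ Real.pi ^ 2 / (2 * n ^ 2) := by linarith
    have h4 : (0:ℝ) ≤ 1 - C := by linarith
    have h5 : (n - 1) / n * (1 - C) ≤ 1 * (Real.pi ^ 2 / (2 * n ^ 2)) :=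
      mul_le_mul h1 h3 h4 zero_le_one
    have h6 : Real.pi ^ 2 / (2 * n ^ 2) ≤ Real.pi ^ 2 / n ^ 2 := by
      gcongr
      nlinarith
    linarith
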